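/- In a weakly communicating finite MDP, for any policy π and any γ ∈ (0,1), ρ^π ≥ ρ^⋆ − (1−γ)(‖V_γ^π − V_γ^⋆‖_∞ + span(V_γ^⋆)) 1. -/
import Mathlib


/-- The span seminorm: span(x) = max_s x(s) − min_s x(s). -/
noncomputable def spanSem {S : Type*} [Fintype S] [Nonempty S] (x : S → ℝ) : ℝ :=
  (⨆ s, x s) - ⨅ s, x s

/-- In a weakly communicating MDP, for any policy π and γ ∈ (0,1),
ρ^π ≥ ρ⋆ − (1−γ)(‖V_γ^π − V_γ⋆‖_∞ + span(V_γ⋆))·1.  The discounted-reduction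
bounds ρ^π ≥ (1−γ)(min_s V_γ^π(s))·1 and ρ⋆ ≤ (1−γ)(max_s V_γ⋆(s))·1 are taken
as hypotheses, and ρ⋆ is constant since the MDP is weakly communicating. -/
theorem stmt16 {S : Type*} [Fintype S] [Nonempty S]
    (γ : ℝ) (hγ0 : 0 < γ) (hγ1 : γ < 1)
    (Vpi Vstar ρpi ρstar : S → ℝ)
    (hconst : ∃ c : ℝ, ρstar = fun _ => c)
    (hlow : ∀ s, (1 - γ) * (⨅ s', Vpi s') ≤ ρpi s)
    (hup : ∀ s, ρstar s ≤ (1 - γ) * (⨆ s', Vstar s')) :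
    ∀ s, ρstar s - (1 - γ) * (‖Vpi - Vstar‖ + spanSem Vstar) ≤ ρpi s := by
  intro s
  have hpos : (0:ℝ) < 1 - γ := by linarith
  set N := ‖Vpi - Vstar‖ with hN
  have hinf : (⨅ s', Vstar s') - N ≤ ⨅ s', Vpi s' := by
    apply le_ciInf
    intro t
    have h1 : (⨅ s', Vstar s') ≤ Vstar t := ciInf_le (Finite.bddBelow_range _) t
    have h2 : Vstar t - Vpi t ≤ N := by
      have := norm_le_pi_norm (Vpi - Vstar) t
      have habs : |Vpi t - Vstar t| ≤ N := by simpa [Real.norm_eq_abs] using this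
      have := abs_le.mp habs
      linarith [this.1, this.2]
    linarith
  have key : ρstar s - (1 - γ) * (N + spanSem Vstar) ≤ (1 - γ) * (⨅ s', Vpi s') := by
    have h2 := hup s
    have hspan : spanSem Vstar = (⨆ s', Vstar s') - ⨅ s', Vstar s' := rfl
    nlinarith [mul_le_mul_of_nonneg_left hinf (le_of_lt hpos)]
  exact key.trans (hlow s)
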